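/- Let Σ ∈ R^{d×d} be positive definite and B_i > 0. The standard-deviation risk parity problem min { √(vᵀΣv) : v > 0, Σ_i B_i log v_i ≥ 0 } has a minimizer, and any minimizer v* satisfies v*_i (Σv*)_i / √((v*)ᵀΣv*) = λ B_i for all i, for some common λ > 0; i.e., the risk contributions of √(vᵀΣv) are proportional to the budgets B_i. -/

import Mathlib

open Finset

namespace SDRP

variable {d : ℕ}

noncomputable def q (S : Matrix (Fin d) (Fin d) ℝ) (v : Fin d → ℝ) : ℝ :=
  ∑ i, ∑ j, v i * S i j * v j

theorem q_eq_dot (S : Matrix (Fin d) (Fin d) ℝ) (v : Fin d → ℝ) :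
    q S v = dotProduct v (S.mulVec v) := by
  simp [q, dotProduct, Matrix.mulVec, Finset.mul_sum, mul_assoc]

theorem q_pos {S : Matrix (Fin d) (Fin d) ℝ} (hS : S.PosDef) {v : Fin d → ℝ} (hv : v ≠ 0) :
    0 < q S v := by
  have := hS.dotProduct_mulVec_pos hv
  simpa [q_eq_dot] using this

theorem q_smul (S : Matrix (Fin d) (Fin d) ℝ) (c : ℝ) (v : Fin d → ℝ) :
    q S (c • v) = c ^ 2 * q S v := by
  simp only [q, Finset.mul_sum, Pi.smul_apply, smul_eq_mul]
  refine Finset.sum_congr rfl fun i _ => Finset.sum_congr rfl fun j _ => by ring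

theorem q_continuous (S : Matrix (Fin d) (Fin d) ℝ) : Continuous (q S) := by
  unfold q
  fun_prop

theorem hasStrictFDerivAt_q {S : Matrix (Fin d) (Fin d) ℝ} (hsym : ∀ i j, S j i = S i j)
    (v : Fin d → ℝ) :
    HasStrictFDerivAt (q S)
      (∑ k, (2 * S.mulVec v k) • ContinuousLinearMap.proj (R := ℝ) (φ := fun _ : Fin d => ℝ) k)
      v := by
  have h : HasStrictFDerivAt (q S)
      (∑ i, ∑ j, ((v i * S i j) • ContinuousLinearMap.proj (R := ℝ) (φ := fun _ : Fin d => ℝ) j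
        + (v j * S i j) • ContinuousLinearMap.proj (R := ℝ) (φ := fun _ : Fin d => ℝ) i)) v := by
    apply HasStrictFDerivAt.fun_sum
    intro i _
    apply HasStrictFDerivAt.fun_sum
    intro j _
    have hi : HasStrictFDerivAt (fun w : Fin d → ℝ => w i)
        (ContinuousLinearMap.proj (R := ℝ) (φ := fun _ : Fin d => ℝ) i) v :=
      (ContinuousLinearMap.proj (R := ℝ) (φ := fun _ : Fin d => ℝ) i).hasStrictFDerivAt
    have hj : HasStrictFDerivAt (fun w : Fin d → ℝ => w j)
        (ContinuousLinearMap.proj (R := ℝ) (φ := fun _ : Fin d => ℝ) j) v :=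
      (ContinuousLinearMap.proj (R := ℝ) (φ := fun _ : Fin d => ℝ) j).hasStrictFDerivAt
    have := (hi.mul_const (S i j)).mul hj
    rw [smul_smul] at this
    exact this
  convert h using 1
  ext w
  simp only [ContinuousLinearMap.sum_apply, ContinuousLinearMap.smul_apply,
    ContinuousLinearMap.add_apply, ContinuousLinearMap.proj_apply, smul_eq_mul,
    Matrix.mulVec, dotProduct]
  have hP : ∑ x : Fin d, ∑ y : Fin d, v x * S x y * w y
      = ∑ x : Fin d, ∑ y : Fin d, S x y * v y * w x := by
    rw [Finset.sum_comm]
    exact Finset.sum_congr rfl fun x _ => Finset.sum_congr rfl fun y _ => by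
      rw [hsym y x]; ring
  simp only [Finset.sum_add_distrib]
  rw [hP, ← Finset.sum_add_distrib]
  refine Finset.sum_congr rfl fun x _ => ?_
  rw [two_mul, add_mul, Finset.sum_mul]
  congr 1
  exact Finset.sum_congr rfl fun y _ => by ring

theorem hasStrictFDerivAt_g (B : Fin d → ℝ) {v : Fin d → ℝ} (hv : ∀ i, v i ≠ 0) :
    HasStrictFDerivAt (fun w : Fin d → ℝ => ∑ i, B i * Real.log (w i))
      (∑ i, (B i * (v i)⁻¹) • ContinuousLinearMap.proj (R := ℝ) (φ := fun _ : Fin d => ℝ) i)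
      v := by
  apply HasStrictFDerivAt.fun_sum
  intro i _
  have hi : HasStrictFDerivAt (fun w : Fin d → ℝ => w i)
      (ContinuousLinearMap.proj (R := ℝ) (φ := fun _ : Fin d => ℝ) i) v :=
    (ContinuousLinearMap.proj (R := ℝ) (φ := fun _ : Fin d => ℝ) i).hasStrictFDerivAt
  have hlog := (Real.hasStrictDerivAt_log (hv i)).comp_hasStrictFDerivAt v hi
  have := hlog.const_mul (B i)
  rw [smul_smul] at this
  exact this

end SDRP

/-- The standard-deviation risk parity problem has a minimizer, and at any
minimizer the risk contributions are proportional to the budgets. -/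
theorem sd_risk_parity (d : ℕ) (S : Matrix (Fin d) (Fin d) ℝ) (hS : S.PosDef)
    (B : Fin d → ℝ) (hB : ∀ i, 0 < B i) :
    letI r : (Fin d → ℝ) → ℝ := fun v => Real.sqrt (∑ i, ∑ j, v i * S i j * v j)
    letI F : Set (Fin d → ℝ) := {v | (∀ i, 0 < v i) ∧ 0 ≤ ∑ i, B i * Real.log (v i)}
    (∃ v ∈ F, ∀ u ∈ F, r v ≤ r u) ∧
      ∀ vstar ∈ F, (∀ u ∈ F, r vstar ≤ r u) →
        ∃ lam : ℝ, 0 < lam ∧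
          ∀ i, vstar i * S.mulVec vstar i / r vstar = lam * B i := by
  classical
  constructor
  · -- existence of a minimizer
    rcases Nat.eq_zero_or_pos d with hd | hd
    · subst hd
      exact ⟨fun _ => 1, ⟨fun i => i.elim0, by simp⟩, fun u _ => by simp⟩
    · haveI : Nonempty (Fin d) := ⟨⟨0, hd⟩⟩
      -- minimum of q on the unit sphere
      have hone_s : (fun _ : Fin d => (1 : ℝ)) ∈ Metric.sphere (0 : Fin d → ℝ) 1 := by
        simp [pi_norm_const]
      obtain ⟨x₀, hx₀s, hx₀min⟩ := (isCompact_sphere (0 : Fin d → ℝ) 1).exists_isMinOn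
        ⟨_, hone_s⟩ (SDRP.q_continuous S).continuousOn
      set m : ℝ := SDRP.q S x₀ with hm_def
      have hx₀ne : x₀ ≠ 0 := by
        intro h
        rw [mem_sphere_zero_iff_norm, h, norm_zero] at hx₀s
        norm_num at hx₀s
      have hm : 0 < m := SDRP.q_pos hS hx₀ne
      have hqlb : ∀ v : Fin d → ℝ, m * ‖v‖ ^ 2 ≤ SDRP.q S v := by
        intro v
        rcases eq_or_ne v 0 with rfl | hv
        · simp [SDRP.q]
        · have hnv : (0 : ℝ) < ‖v‖ := norm_pos_iff.mpr hv
          have hu : ‖v‖⁻¹ • v ∈ Metric.sphere (0 : Fin d → ℝ) 1 := by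
            rw [mem_sphere_zero_iff_norm, norm_smul, norm_inv, norm_norm,
              inv_mul_cancel₀ hnv.ne']
          have h1 : m ≤ SDRP.q S (‖v‖⁻¹ • v) := isMinOn_iff.mp hx₀min _ hu
          have h2 : SDRP.q S (‖v‖⁻¹ • v) = (‖v‖⁻¹) ^ 2 * SDRP.q S v := SDRP.q_smul _ _ _
          rw [h2] at h1
          have h3 : m * ‖v‖ ^ 2 ≤ (‖v‖⁻¹) ^ 2 * SDRP.q S v * ‖v‖ ^ 2 := by
            nlinarith [sq_nonneg ‖v‖]
          calc m * ‖v‖ ^ 2 ≤ (‖v‖⁻¹) ^ 2 * SDRP.q S v * ‖v‖ ^ 2 := h3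
            _ = SDRP.q S v := by field_simp
      set one : Fin d → ℝ := fun _ => 1 with hone_def
      set Q1 : ℝ := SDRP.q S one with hQ1_def
      set R' : ℝ := max (Real.sqrt (Q1 / m)) 1 with hR'_def
      have hnormbd : ∀ u : Fin d → ℝ, SDRP.q S u ≤ Q1 → ‖u‖ ≤ R' := by
        intro u hqu
        have h1 : m * ‖u‖ ^ 2 ≤ Q1 := le_trans (hqlb u) hqu
        have h2 : ‖u‖ ^ 2 ≤ Q1 / m := by
          rw [le_div_iff₀ hm]; linarith [h1]
        have h3 : ‖u‖ ≤ Real.sqrt (Q1 / m) := by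
          rw [show ‖u‖ = Real.sqrt (‖u‖ ^ 2) from (Real.sqrt_sq (norm_nonneg u)).symm]
          exact Real.sqrt_le_sqrt h2
        exact le_trans h3 (le_max_left _ _)
      have hub : ∀ u : Fin d → ℝ, SDRP.q S u ≤ Q1 → ∀ j, u j ≤ R' := by
        intro u hqu j
        calc u j ≤ |u j| := le_abs_self _
          _ = ‖u j‖ := (Real.norm_eq_abs _).symm
          _ ≤ ‖u‖ := norm_le_pi_norm u j
          _ ≤ R' := hnormbd u hqu
      set C : ℝ := (∑ j, B j) * Real.log R' with hC_def
      have hlogR' : 0 ≤ Real.log R' := Real.log_nonneg (le_max_right _ _)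
      have hC0 : 0 ≤ C := mul_nonneg (Finset.sum_nonneg fun j _ => (hB j).le) hlogR'
      set ε : Fin d → ℝ := fun i => Real.exp (-C / B i) with hε_def
      have hεpos : ∀ i, 0 < ε i := fun i => Real.exp_pos _
      have hε1 : ∀ i, ε i ≤ 1 := by
        intro i
        apply Real.exp_le_one_iff.mpr
        apply div_nonpos_of_nonpos_of_nonneg (neg_nonpos.mpr hC0) (hB i).le
      have hlb : ∀ u : Fin d → ℝ, (∀ i, 0 < u i) → 0 ≤ ∑ i, B i * Real.log (u i) →
          SDRP.q S u ≤ Q1 → ∀ i, ε i ≤ u i := by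
        intro u hu hg hq i
        have hlogR : ∀ j, Real.log (u j) ≤ Real.log R' := fun j =>
          Real.log_le_log (hu j) (hub u hq j)
        have hsum : ∑ j ∈ Finset.univ.erase i, B j * Real.log (u j) ≤ C := by
          calc ∑ j ∈ Finset.univ.erase i, B j * Real.log (u j)
              ≤ ∑ j ∈ Finset.univ.erase i, B j * Real.log R' :=
                Finset.sum_le_sum fun j _ => mul_le_mul_of_nonneg_left (hlogR j) (hB j).le
            _ ≤ ∑ j, B j * Real.log R' :=
                Finset.sum_le_sum_of_subset_of_nonneg (Finset.subset_univ _)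
                  (fun j _ _ => mul_nonneg (hB j).le hlogR')
            _ = C := by rw [hC_def, Finset.sum_mul]
        have hsplit : B i * Real.log (u i) + ∑ j ∈ Finset.univ.erase i, B j * Real.log (u j)
            = ∑ j, B j * Real.log (u j) :=
          Finset.add_sum_erase Finset.univ (fun j => B j * Real.log (u j)) (Finset.mem_univ i)
        have hi : -C ≤ B i * Real.log (u i) := by linarith
        have hlogi : -C / B i ≤ Real.log (u i) := by
          rw [div_le_iff₀ (hB i)]
          calc -C ≤ B i * Real.log (u i) := hi
            _ = Real.log (u i) * B i := mul_comm _ _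
        calc ε i = Real.exp (-C / B i) := rfl
          _ ≤ Real.exp (Real.log (u i)) := Real.exp_le_exp.mpr hlogi
          _ = u i := Real.exp_log (hu i)
      set gt : (Fin d → ℝ) → ℝ := fun v => ∑ i, B i * Real.log (max (v i) (ε i)) with hgt_def
      have hgtc : Continuous gt := by
        apply continuous_finset_sum
        intro i _
        apply Continuous.mul continuous_const
        exact ((continuous_apply i).max continuous_const).log
          fun x => (lt_of_lt_of_le (hεpos i) (le_max_right _ _)).ne' 
      set K : Set (Fin d → ℝ) :=
        {v | ∀ i, ε i ≤ v i} ∩ {v | 0 ≤ gt v} ∩ {v | SDRP.q S v ≤ Q1} with hK_def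
      have hKclosed : IsClosed K := by
        refine IsClosed.inter (IsClosed.inter ?_ ?_) ?_
        · rw [Set.setOf_forall]
          exact isClosed_iInter fun i => isClosed_le continuous_const (continuous_apply i)
        · exact isClosed_le continuous_const hgtc
        · exact isClosed_le (SDRP.q_continuous S) continuous_const
      have hKbdd : Bornology.IsBounded K := by
        apply (Metric.isBounded_closedBall (x := (0 : Fin d → ℝ)) (r := R')).subset
        intro v hv
        rw [Metric.mem_closedBall, dist_zero_right]
        exact hnormbd v hv.2
      have hKcompact : IsCompact K := Metric.isCompact_of_isClosed_isBounded hKclosed hKbdd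
      have honeK : one ∈ K := by
        refine ⟨⟨fun i => by simpa [hone_def] using hε1 i, ?_⟩, hQ1_def.ge⟩
        have : gt one = 0 := by
          refine Finset.sum_eq_zero fun i _ => ?_
          rw [hone_def]
          simp only
          rw [max_eq_left (hε1 i), Real.log_one, mul_zero]
        rw [Set.mem_setOf_eq, this]
      obtain ⟨w, hwK, hwmin⟩ := hKcompact.exists_isMinOn ⟨one, honeK⟩
        (SDRP.q_continuous S).continuousOn
      have hwpos : ∀ i, 0 < w i := fun i => lt_of_lt_of_le (hεpos i) (hwK.1.1 i)
      have hgtw : gt w = ∑ i, B i * Real.log (w i) := by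
        refine Finset.sum_congr rfl fun i _ => ?_
        rw [max_eq_left (hwK.1.1 i)]
      have hwF : (∀ i, 0 < w i) ∧ 0 ≤ ∑ i, B i * Real.log (w i) := by
        refine ⟨hwpos, ?_⟩
        rw [← hgtw]
        exact hwK.1.2
      refine ⟨w, hwF, ?_⟩
      intro u huF
      show Real.sqrt (SDRP.q S w) ≤ Real.sqrt (SDRP.q S u)
      rcases le_or_gt (SDRP.q S u) Q1 with h | h
      · have huK : u ∈ K := by
          refine ⟨⟨hlb u huF.1 huF.2 h, ?_⟩, h⟩
          have : gt u = ∑ i, B i * Real.log (u i) := by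
            refine Finset.sum_congr rfl fun i _ => ?_
            rw [max_eq_left (hlb u huF.1 huF.2 h i)]
          rw [Set.mem_setOf_eq, this]
          exact huF.2
        exact Real.sqrt_le_sqrt (isMinOn_iff.mp hwmin u huK)
      · have h1 : SDRP.q S w ≤ Q1 := isMinOn_iff.mp hwmin one honeK
        exact Real.sqrt_le_sqrt (le_trans h1 h.le)
  · -- the KKT condition
    intro vstar hvF hmin
    rcases Nat.eq_zero_or_pos d with hd | hd
    · subst hd
      exact ⟨1, one_pos, fun i => i.elim0⟩
    have i₀ : Fin d := ⟨0, hd⟩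
    have hvpos : ∀ i, 0 < vstar i := hvF.1
    have hg0 : 0 ≤ ∑ i, B i * Real.log (vstar i) := hvF.2
    have hvne : vstar ≠ 0 := by
      intro h
      have := hvpos i₀
      rw [h] at this
      simp at this
    have hqpos : 0 < SDRP.q S vstar := SDRP.q_pos hS hvne
    set ρ : ℝ := Real.sqrt (SDRP.q S vstar) with hρ_def
    have hρ : 0 < ρ := Real.sqrt_pos.mpr hqpos
    have hsym : ∀ i j, S j i = S i j := fun i j => by
      simpa using hS.1.apply i j
    set Lq : (Fin d → ℝ) →L[ℝ] ℝ :=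
      ∑ k, (2 * S.mulVec vstar k) • ContinuousLinearMap.proj (R := ℝ)
        (φ := fun _ : Fin d => ℝ) k with hLq_def
    have hLq : HasStrictFDerivAt (SDRP.q S) Lq vstar := SDRP.hasStrictFDerivAt_q hsym vstar
    have hr' : HasStrictFDerivAt (fun v : Fin d → ℝ =>
        Real.sqrt (∑ i, ∑ j, v i * S i j * v j)) ((1 / (2 * ρ)) • Lq) vstar := by
      have h := (Real.hasStrictDerivAt_sqrt hqpos.ne').comp_hasStrictFDerivAt vstar hLq
      exact h
    set Lg : (Fin d → ℝ) →L[ℝ] ℝ :=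
      ∑ i, (B i * (vstar i)⁻¹) • ContinuousLinearMap.proj (R := ℝ)
        (φ := fun _ : Fin d => ℝ) i with hLg_def
    have hLg : HasStrictFDerivAt (fun w : Fin d → ℝ => ∑ i, B i * Real.log (w i)) Lg vstar :=
      SDRP.hasStrictFDerivAt_g B (fun i => (hvpos i).ne')
    have hextr : IsLocalExtrOn (fun v : Fin d → ℝ =>
        Real.sqrt (∑ i, ∑ j, v i * S i j * v j))
        {x | (∑ i, B i * Real.log (x i)) = ∑ i, B i * Real.log (vstar i)} vstar := by
      refine Or.inl ?_
      have hU : IsOpen {x : Fin d → ℝ | ∀ i, 0 < x i} := by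
        rw [Set.setOf_forall]
        exact isOpen_iInter_of_finite fun i => isOpen_lt continuous_const (continuous_apply i)
      have hUx : {x : Fin d → ℝ | ∀ i, 0 < x i} ∈
          nhdsWithin vstar {x | (∑ i, B i * Real.log (x i)) = ∑ i, B i * Real.log (vstar i)} :=
        mem_nhdsWithin_of_mem_nhds (hU.mem_nhds hvpos)
      have hself := self_mem_nhdsWithin (a := vstar)
        (s := {x | (∑ i, B i * Real.log (x i)) = ∑ i, B i * Real.log (vstar i)})
      filter_upwards [hUx, hself] with x hxU hxs
      refine hmin x ⟨hxU, ?_⟩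
      rw [hxs]
      exact hg0
    obtain ⟨a, b, hab, heq⟩ := hextr.exists_multipliers_of_hasStrictFDerivAt_1d hLg hr'
    have heval : ∀ k, a * (B k * (vstar k)⁻¹)
        + b * (1 / (2 * ρ) * (2 * S.mulVec vstar k)) = 0 := by
      intro k
      have h := ContinuousLinearMap.ext_iff.mp heq (Pi.single k 1)
      simpa [hLg_def, hLq_def, ContinuousLinearMap.sum_apply, Pi.single_apply,
        mul_ite, mul_one, mul_zero, Finset.sum_ite_eq'] using h
    have hb : b ≠ 0 := by
      intro hb0
      have h0 := heval i₀
      rw [hb0] at h0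
      have ha0 : a = 0 := by
        have hBk := hB i₀
        have hvk := hvpos i₀
        have hne : B i₀ * (vstar i₀)⁻¹ ≠ 0 := by positivity
        field_simp at h0
        have h0' : a * (B i₀ * ρ) = 0 := by linarith
        rcases mul_eq_zero.mp h0' with h | h
        · exact h
        · exact absurd h (mul_pos (hB i₀) hρ).ne'
      exact hab (by simp [ha0, hb0, Prod.ext_iff])
    have hkey : ∀ k, vstar k * S.mulVec vstar k / ρ = (-a / b) * B k := by
      intro k
      have h := heval k
      have hvk : (vstar k : ℝ) ≠ 0 := (hvpos k).ne'
      have e : 1 / (2 * ρ) * (2 * S.mulVec vstar k) = S.mulVec vstar k / ρ := by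
        field_simp
      rw [e] at h
      have h2 : b * (S.mulVec vstar k / ρ) = -(a * (B k * (vstar k)⁻¹)) := by linarith
      rw [div_mul_eq_mul_div, eq_div_iff hb]
      calc vstar k * S.mulVec vstar k / ρ * b
          = vstar k * (b * (S.mulVec vstar k / ρ)) := by ring
        _ = vstar k * -(a * (B k * (vstar k)⁻¹)) := by rw [h2]
        _ = -a * B k * (vstar k * (vstar k)⁻¹) := by ring
        _ = -a * B k := by rw [mul_inv_cancel₀ hvk, mul_one]
    refine ⟨-a / b, ?_, hkey⟩
    have hsumB : 0 < ∑ k, B k :=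
      Finset.sum_pos (fun k _ => hB k) ⟨i₀, Finset.mem_univ i₀⟩
    have hsum : ∑ k, vstar k * S.mulVec vstar k / ρ = (-a / b) * ∑ k, B k := by
      rw [Finset.mul_sum]
      exact Finset.sum_congr rfl fun k _ => hkey k
    have hqsum : ∑ k, vstar k * S.mulVec vstar k = SDRP.q S vstar := by
      rw [SDRP.q_eq_dot]
      rfl
    have hρsq : ρ * ρ = SDRP.q S vstar := Real.mul_self_sqrt hqpos.le
    have hlhs : ∑ k, vstar k * S.mulVec vstar k / ρ = ρ := by
      rw [← Finset.sum_div, hqsum, ← hρsq]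
      field_simp
    rw [hlhs] at hsum
    have : -a / b = ρ / ∑ k, B k := (eq_div_iff hsumB.ne').mpr hsum.symm
    rw [this]
    positivity
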